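/- Let 𝒮 ⊆ 2^V admit a contiguous ordering of V. If some maximal set B ∈ 𝒮 contains at least three distinct minimal sets A_1, A_2, A_3 ∈ 𝒮 as proper subsets, then a contradiction follows; i.e., if a maximal set of 𝒮 contains three distinct minimal sets of 𝒮, then 𝒮 admits no contiguous ordering of V. -/
import Mathlib


/-- `S` occupies consecutive positions in the ordering `σ`. -/
def IsIntervalIn {V : Type*} {n : ℕ} (σ : Fin n ≃ V) (S : Set V) : Prop :=
  ∀ i j k : Fin n, i ≤ j → j ≤ k → σ i ∈ S → σ k ∈ S → σ j ∈ S

/-- `σ` is a contiguous ordering of `V` to `𝒮`: every member is consecutive, and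
whenever `S ⊆ S'` (both members), `S` contains the first or last element of `S'`. -/
def ContiguousOrd {V : Type*} {n : ℕ} (σ : Fin n ≃ V) (𝒮 : Set (Set V)) : Prop :=
  (∀ S ∈ 𝒮, IsIntervalIn σ S) ∧
  ∀ S ∈ 𝒮, ∀ S' ∈ 𝒮, S ⊆ S' →
    ∀ i j : Fin n, σ i ∈ S' → σ j ∈ S' → (∀ k : Fin n, σ k ∈ S' → i ≤ k ∧ k ≤ j) →
      (σ i ∈ S ∨ σ j ∈ S)

/-- `A` is a minimal member of `𝒮`. -/
def MinimalIn {V : Type*} (𝒮 : Set (Set V)) (A : Set V) : Prop :=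
  A ∈ 𝒮 ∧ ∀ A' ∈ 𝒮, A' ⊆ A → A' = A

/-- `B` is a maximal member of `𝒮`. -/
def MaximalIn {V : Type*} (𝒮 : Set (Set V)) (B : Set V) : Prop :=
  B ∈ 𝒮 ∧ ∀ B' ∈ 𝒮, B ⊆ B' → B' = B

/-- If a maximal set of `𝒮` contains three distinct minimal sets of `𝒮` as proper
subsets, then `𝒮` admits no contiguous ordering of `V`. -/
lemma comp_left {V : Type*} {n : ℕ} (σ : Fin n ≃ V) (A A' : Set V)
    (hA : IsIntervalIn σ A) (hA' : IsIntervalIn σ A') (i : Fin n)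
    (hiA : σ i ∈ A) (hiA' : σ i ∈ A')
    (hlow : ∀ k : Fin n, σ k ∈ A → i ≤ k) (hlow' : ∀ k : Fin n, σ k ∈ A' → i ≤ k) :
    A ⊆ A' ∨ A' ⊆ A := by
  by_cases h : A ⊆ A'
  · exact Or.inl h
  · right
    rw [Set.not_subset] at h
    obtain ⟨x, hxA, hxA'⟩ := h
    intro y hy
    set p := σ.symm x with hp
    set q := σ.symm y with hq
    have hpx : σ p = x := σ.apply_symm_apply x
    have hqy : σ q = y := σ.apply_symm_apply y
    rcases le_total p q with hpq | hqp
    · exact absurd (hA' i p q (hlow p (by rwa [hpx])) hpq hiA' (by rwa [hqy]))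
        (by rwa [hpx])
    · have := hA i q p (hlow' q (by rwa [hqy])) hqp hiA (by rwa [hpx])
      rwa [hqy] at this

lemma comp_right {V : Type*} {n : ℕ} (σ : Fin n ≃ V) (A A' : Set V)
    (hA : IsIntervalIn σ A) (hA' : IsIntervalIn σ A') (j : Fin n)
    (hjA : σ j ∈ A) (hjA' : σ j ∈ A')
    (hhi : ∀ k : Fin n, σ k ∈ A → k ≤ j) (hhi' : ∀ k : Fin n, σ k ∈ A' → k ≤ j) :
    A ⊆ A' ∨ A' ⊆ A := by
  by_cases h : A ⊆ A'
  · exact Or.inl h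
  · right
    rw [Set.not_subset] at h
    obtain ⟨x, hxA, hxA'⟩ := h
    intro y hy
    set p := σ.symm x with hp
    set q := σ.symm y with hq
    have hpx : σ p = x := σ.apply_symm_apply x
    have hqy : σ q = y := σ.apply_symm_apply y
    rcases le_total q p with hqp | hpq
    · exact absurd (hA' q p j hqp (hhi p (by rwa [hpx])) (by rwa [hqy]) hjA')
        (by rwa [hpx])
    · have := hA p q j hpq (hhi' q (by rwa [hqy])) (by rwa [hpx]) hjA
      rwa [hqy] at this

theorem no_contiguous_ordering_of_three_minimal_in_maximal
    {V : Type*} [Fintype V] {n : ℕ} (hn : n = Fintype.card V)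
    (𝒮 : Set (Set V)) (hne : ∅ ∉ 𝒮)
    (B : Set V) (hB : MaximalIn 𝒮 B)
    (A₁ A₂ A₃ : Set V)
    (h1 : MinimalIn 𝒮 A₁) (h2 : MinimalIn 𝒮 A₂) (h3 : MinimalIn 𝒮 A₃)
    (h12 : A₁ ≠ A₂) (h13 : A₁ ≠ A₃) (h23 : A₂ ≠ A₃)
    (hs1 : A₁ ⊂ B) (hs2 : A₂ ⊂ B) (hs3 : A₃ ⊂ B)
    (σ : Fin n ≃ V) (hσ : ContiguousOrd σ 𝒮) :
    False := by
  classical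
  -- B is nonempty
  have hBne : B.Nonempty := by
    rcases Set.eq_empty_or_nonempty B with h | h
    · exact absurd (h ▸ hB.1) hne
    · exact h
  set T : Finset (Fin n) := Finset.univ.filter (fun k => σ k ∈ B) with hT
  have hTne : T.Nonempty := by
    obtain ⟨v, hv⟩ := hBne
    exact ⟨σ.symm v, by simp [hT, σ.apply_symm_apply, hv]⟩
  set i := T.min' hTne with hi
  set j := T.max' hTne with hj
  have hiB : σ i ∈ B := by
    have := T.min'_mem hTne
    simpa [hT] using this
  have hjB : σ j ∈ B := by
    have := T.max'_mem hTne
    simpa [hT] using this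
  have hij : ∀ k : Fin n, σ k ∈ B → i ≤ k ∧ k ≤ j := by
    intro k hk
    have hkT : k ∈ T := by simp [hT, hk]
    exact ⟨T.min'_le k hkT, T.le_max' k hkT⟩
  -- each minimal set contains σ i or σ j
  have ends : ∀ A : Set V, A ∈ 𝒮 → A ⊆ B → σ i ∈ A ∨ σ j ∈ A := fun A hA hAB =>
    hσ.2 A hA B hB.1 hAB i j hiB hjB hij
  have e1 := ends A₁ h1.1 hs1.subset
  have e2 := ends A₂ h2.1 hs2.subset
  have e3 := ends A₃ h3.1 hs3.subset
  -- two minimal sets sharing an endpoint are equal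
  have keyL : ∀ A A' : Set V, MinimalIn 𝒮 A → MinimalIn 𝒮 A' → A ⊆ B → A' ⊆ B →
      σ i ∈ A → σ i ∈ A' → A = A' := by
    intro A A' hA hA' hAB hA'B hiA hiA'
    rcases comp_left σ A A' (hσ.1 A hA.1) (hσ.1 A' hA'.1) i hiA hiA'
        (fun k hk => (hij k (hAB hk)).1) (fun k hk => (hij k (hA'B hk)).1) with h | h
    · exact hA'.2 A hA.1 h
    · exact (hA.2 A' hA'.1 h).symm
  have keyR : ∀ A A' : Set V, MinimalIn 𝒮 A → MinimalIn 𝒮 A' → A ⊆ B → A' ⊆ B →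
      σ j ∈ A → σ j ∈ A' → A = A' := by
    intro A A' hA hA' hAB hA'B hjA hjA'
    rcases comp_right σ A A' (hσ.1 A hA.1) (hσ.1 A' hA'.1) j hjA hjA'
        (fun k hk => (hij k (hAB hk)).2) (fun k hk => (hij k (hA'B hk)).2) with h | h
    · exact hA'.2 A hA.1 h
    · exact (hA.2 A' hA'.1 h).symm
  rcases e1 with e1 | e1 <;> rcases e2 with e2 | e2 <;> rcases e3 with e3 | e3
  · exact h12 (keyL A₁ A₂ h1 h2 hs1.subset hs2.subset e1 e2)
  · exact h12 (keyL A₁ A₂ h1 h2 hs1.subset hs2.subset e1 e2)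
  · exact h13 (keyL A₁ A₃ h1 h3 hs1.subset hs3.subset e1 e3)
  · exact h23 (keyR A₂ A₃ h2 h3 hs2.subset hs3.subset e2 e3)
  · exact h23 (keyL A₂ A₃ h2 h3 hs2.subset hs3.subset e2 e3)
  · exact h13 (keyR A₁ A₃ h1 h3 hs1.subset hs3.subset e1 e3)
  · exact h12 (keyR A₁ A₂ h1 h2 hs1.subset hs2.subset e1 e2)
  · exact h12 (keyR A₁ A₂ h1 h2 hs1.subset hs2.subset e1 e2)
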